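/- Let K be a field. The subset Λ of the field of Hahn series HahnSeries ℝ K consisting of those series f whose support {d ∈ ℝ : coefficient of f at d is nonzero} has finite intersection with (−∞, D] for every D ∈ ℝ, is a subfield: it contains 0 and 1 and is closed under addition, negation, multiplication, and multiplicative inverse. (Thus the universal Novikov field over K is a field.) -/

import Mathlib

open HahnSeries Set

/-- The universal Novikov field over `K`, as the set of Hahn series over `ℝ` whose support
meets every ray `(-∞, D]` in a finite set. -/
def NovikovSet (K : Type*) [Field K] : Set (HahnSeries ℝ K) :=
  {f | ∀ D : ℝ, (f.support ∩ Set.Iic D).Finite}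

section aux
variable {K : Type*} [Field K]

lemma nov_subset {S : Set ℝ} {f : HahnSeries ℝ K} (hS : ∀ D : ℝ, (S ∩ Set.Iic D).Finite)
    (h : f.support ⊆ S) : f ∈ NovikovSet K :=
  fun D => (hS D).subset (inter_subset_inter_left _ h)

lemma nov_one : (1 : HahnSeries ℝ K) ∈ NovikovSet K :=
  nov_subset (fun D => (Set.finite_singleton 0).inter_of_left _) support_one.subset

lemma nov_add {f g : HahnSeries ℝ K} (hf : f ∈ NovikovSet K) (hg : g ∈ NovikovSet K) :
    f + g ∈ NovikovSet K := by
  intro D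
  refine ((hf D).union (hg D)).subset ?_
  rw [← Set.union_inter_distrib_right]
  exact inter_subset_inter_left _ (support_add_subset _ _)

lemma nov_neg {f : HahnSeries ℝ K} (hf : f ∈ NovikovSet K) : -f ∈ NovikovSet K := by
  intro D; rw [show (-f).support = f.support from support_neg]; exact hf D

lemma nov_min {f : HahnSeries ℝ K} (hf : f ∈ NovikovSet K) (h0 : f ≠ 0) :
    ∃ a ∈ f.support, ∀ x ∈ f.support, a ≤ x := by
  obtain ⟨d, hd⟩ := HahnSeries.support_nonempty_iff.mpr h0
  obtain ⟨a, ha, hmin⟩ := Set.exists_min_image _ id (hf d) ⟨d, hd, le_refl d⟩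
  refine ⟨a, ha.1, fun x hx => ?_⟩
  by_cases hxd : x ≤ d
  · exact hmin x ⟨hx, hxd⟩
  · exact le_trans ha.2 (le_of_not_ge hxd)

lemma nov_mul {f g : HahnSeries ℝ K} (hf : f ∈ NovikovSet K) (hg : g ∈ NovikovSet K) :
    f * g ∈ NovikovSet K := by
  by_cases h0 : f = 0
  · intro D; simp [h0, HahnSeries.support_zero]
  by_cases h1 : g = 0
  · intro D; simp [h1, HahnSeries.support_zero]
  obtain ⟨a, _, hfa⟩ := nov_min hf h0
  obtain ⟨b, _, hgb⟩ := nov_min hg h1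
  intro D
  have key : (f * g).support ∩ Set.Iic D ⊆
      Set.image2 (· + ·) (f.support ∩ Set.Iic (D - b)) (g.support ∩ Set.Iic (D - a)) := by
    rintro x ⟨hx, hxD⟩
    obtain ⟨i, hi, j, hj, rfl⟩ := support_mul_subset hx
    simp only [Set.mem_Iic] at hxD
    exact ⟨i, ⟨hi, by simp only [Set.mem_Iic]; linarith [hgb j hj]⟩,
           j, ⟨hj, by simp only [Set.mem_Iic]; linarith [hfa i hi]⟩, rfl⟩
  exact (Set.Finite.image2 _ (hf _) (hg _)).subset key

lemma nov_pow {f : HahnSeries ℝ K} (hf : f ∈ NovikovSet K) (n : ℕ) :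
    f ^ n ∈ NovikovSet K := by
  induction n with
  | zero => rw [pow_zero]; exact nov_one
  | succ n ih => rw [pow_succ]; exact nov_mul ih hf

lemma supp_pow_lb {u : HahnSeries ℝ K} {ε : ℝ} (hε : ∀ x ∈ u.support, ε ≤ x) (n : ℕ) :
    ∀ x ∈ (u ^ n).support, (n : ℝ) * ε ≤ x := by
  induction n with
  | zero =>
    intro x hx
    rw [pow_zero] at hx
    have := support_one.subset hx
    simp_all
  | succ n ih =>
    intro x hx
    rw [pow_succ] at hx
    obtain ⟨i, hi, j, hj, rfl⟩ := support_mul_subset hx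
    have h1 := ih i hi
    have h2 := hε j hj
    push_cast
    nlinarith

lemma nov_hsum_powers {u : HahnSeries ℝ K} (hu : 0 < u.orderTop) (humem : u ∈ NovikovSet K) :
    (SummableFamily.powers u).hsum ∈ NovikovSet K := by
  have hsupp : (SummableFamily.powers u).hsum.support ⊆ ⋃ n : ℕ, (u ^ n).support := by
    refine Set.Subset.trans SummableFamily.support_hsum_subset ?_
    apply Set.iUnion_mono
    intro n
    rw [SummableFamily.coe_powers hu]
  by_cases h0 : u = 0
  · refine nov_subset (S := {0}) (fun D => (Set.finite_singleton 0).inter_of_left _) ?_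
    refine hsupp.trans ?_
    rintro x hx
    obtain ⟨n, hn⟩ := Set.mem_iUnion.mp hx
    rcases n with _ | n
    · rw [pow_zero] at hn; exact support_one.subset hn
    · rw [h0, zero_pow (Nat.succ_ne_zero n)] at hn
      simp [HahnSeries.support] at hn
  · obtain ⟨ε, hεs, hεmin⟩ := nov_min humem h0
    have hε0 : 0 < ε := by
      have h1 : u.orderTop ≤ (ε : WithTop ℝ) := orderTop_le_of_coeff_ne_zero hεs
      exact_mod_cast lt_of_lt_of_le hu h1
    intro D
    obtain ⟨N, hN⟩ := exists_nat_gt (D / ε)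
    have hND : D < (N : ℝ) * ε := (div_lt_iff₀ hε0).mp hN
    have key : (SummableFamily.powers u).hsum.support ∩ Set.Iic D ⊆
        ⋃ n ∈ Finset.range N, ((u ^ n).support ∩ Set.Iic D) := by
      rintro x ⟨hx, hxD⟩
      obtain ⟨n, hn⟩ := Set.mem_iUnion.mp (hsupp hx)
      have hnN : n < N := by
        by_contra hcon
        push_neg at hcon
        have h1 := supp_pow_lb hεmin n x hn
        have h2 : (N : ℝ) * ε ≤ (n : ℝ) * ε :=
          mul_le_mul_of_nonneg_right (by exact_mod_cast hcon) hε0.le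
        simp only [Set.mem_Iic] at hxD
        linarith
      exact Set.mem_biUnion (Finset.mem_range.mpr hnN) ⟨hn, hxD⟩
    exact (Set.Finite.biUnion (Finset.finite_toSet _) (fun n _ => nov_pow humem n D)).subset key

end aux

/-- **The universal Novikov field is a subfield of the Hahn series field:** it contains
`0` and `1` and is closed under addition, negation, multiplication and inversion. -/
theorem novikov_is_subfield (K : Type*) [Field K] :
    (0 : HahnSeries ℝ K) ∈ NovikovSet K ∧
    (1 : HahnSeries ℝ K) ∈ NovikovSet K ∧
    (∀ f ∈ NovikovSet K, ∀ g ∈ NovikovSet K, f + g ∈ NovikovSet K) ∧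
    (∀ f ∈ NovikovSet K, -f ∈ NovikovSet K) ∧
    (∀ f ∈ NovikovSet K, ∀ g ∈ NovikovSet K, f * g ∈ NovikovSet K) ∧
    (∀ f ∈ NovikovSet K, f⁻¹ ∈ NovikovSet K) := by
  refine ⟨?_, nov_one, fun f hf g hg => nov_add hf hg, fun f hf => nov_neg hf,
    fun f hf g hg => nov_mul hf hg, ?_⟩
  · intro D; simp [HahnSeries.support_zero]
  · intro f hf
    by_cases h0 : f = 0
    · rw [h0, inv_zero]
      intro D; simp [HahnSeries.support_zero]
    have hc : f.leadingCoeff ≠ 0 := leadingCoeff_ne_zero.mpr h0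
    set s : HahnSeries ℝ K := single (-f.order) (f.leadingCoeff)⁻¹ with hs
    have hu : 0 < (1 - s * f).orderTop := unit_aux f (inv_mul_cancel₀ hc) _ (neg_add_cancel f.order)
    have hsmem : s ∈ NovikovSet K :=
      nov_subset (fun D => (Set.finite_singleton _).inter_of_left _) support_single_subset
    have humem : (1 - s * f) ∈ NovikovSet K := by
      rw [sub_eq_add_neg]
      exact nov_add nov_one (nov_neg (nov_mul hsmem hf))
    have h1 : (1 - (1 - s * f)) * (SummableFamily.powers (1 - s * f)).hsum = 1 :=
      SummableFamily.one_sub_self_mul_hsum_powers hu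
    rw [sub_sub_cancel] at h1
    have hinv : f⁻¹ = s * (SummableFamily.powers (1 - s * f)).hsum := by
      apply inv_eq_of_mul_eq_one_right
      rw [← mul_assoc, mul_comm f s, h1]
    rw [hinv]
    exact nov_mul hsmem (nov_hsum_powers hu humem)
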